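/- Let X ∈ ℝ^{K×N} with its N columns partitioned into C classes of sizes n_1,…,n_C (each n_c ≥ 1, Σ_c n_c = N), with diagonal 0/1 column selectors P_c. Let E_N ∈ ℝ^{N×N} be the all-ones matrix, M_c = (1/n_c)·X P_c E_N P_c (the matrix supported on class-c columns, each such column equal to the class-c column mean), M̂ = Σ_{c=1}^C M_c, and M = (1/N)·X E_N (every column equal to the overall column mean). Define the Fisher discriminative coefficient term g(X) = Σ_{c=1}^C ( ‖X P_c − M_c‖_F² − ‖M_c − M P_c‖_F² ) + ‖X‖_F². Then g is differentiable and the gradient of (1/2)g with respect to the Frobenius inner product at X equals 2X + M − 2M̂. -/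

import Mathlib

open Matrix Finset

attribute [local instance] Matrix.normedAddCommGroup Matrix.normedSpace

/-- Squared Frobenius norm: `‖A‖_F² = trace (A * Aᵀ)`. -/
noncomputable def frobSq {m n : Type*} [Fintype m] [Fintype n] (A : Matrix m n ℝ) : ℝ :=
  Matrix.trace (A * Aᵀ)

/-- Diagonal 0/1 selector matrix for class `c` determined by a labeling `lab`. -/
noncomputable def sel {N C : ℕ} (lab : Fin N → Fin C) (c : Fin C) :
    Matrix (Fin N) (Fin N) ℝ :=
  Matrix.diagonal fun i => if lab i = c then (1 : ℝ) else 0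

/-- The all-ones `N × N` matrix. -/
def onesM (N : ℕ) : Matrix (Fin N) (Fin N) ℝ := Matrix.of fun _ _ => (1 : ℝ)

/-- The continuous linear functional `H ↦ ⟨G, H⟩_F = trace (G * Hᵀ)`. -/
noncomputable def frobCLM {m n : Type*} [Fintype m] [Fintype n]
    (G : Matrix m n ℝ) : Matrix m n ℝ →L[ℝ] ℝ :=
  LinearMap.toContinuousLinearMap
  { toFun := fun H => Matrix.trace (G * Hᵀ)
    map_add' := fun H₁ H₂ => by simp [Matrix.transpose_add, Matrix.mul_add]
    map_smul' := fun r H => by simp [Matrix.transpose_smul, Matrix.mul_smul] }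

/-! ### Auxiliary lemmas -/

lemma frobCLM_apply {m n : Type*} [Fintype m] [Fintype n] (G H : Matrix m n ℝ) :
    frobCLM G H = Matrix.trace (G * Hᵀ) := rfl

/-- The Frobenius pairing as a continuous bilinear map. -/
noncomputable def frobB {m n : Type*} [Fintype m] [Fintype n] [DecidableEq m] [DecidableEq n] :
    Matrix m n ℝ →L[ℝ] Matrix m n ℝ →L[ℝ] ℝ :=
  LinearMap.toContinuousLinearMap
  { toFun := frobCLM
    map_add' := fun G₁ G₂ => by
      ext H; simp [frobCLM_apply, Matrix.add_mul]
    map_smul' := fun r G => by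
      ext H; simp [frobCLM_apply, Matrix.smul_mul] }

/-- Right multiplication by a fixed matrix, as a continuous linear map. -/
noncomputable def mulR {K N : ℕ} (A : Matrix (Fin N) (Fin N) ℝ) :
    Matrix (Fin K) (Fin N) ℝ →L[ℝ] Matrix (Fin K) (Fin N) ℝ :=
  LinearMap.toContinuousLinearMap
  { toFun := fun Z => Z * A
    map_add' := fun _ _ => Matrix.add_mul _ _ _
    map_smul' := fun r Z => Matrix.smul_mul r Z A }

/-- Derivative of the quadratic form `Z ↦ trace (Z A Zᵀ)`. -/
lemma hasFDerivAt_traceQuad {K N : ℕ} (A : Matrix (Fin N) (Fin N) ℝ)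
    (X : Matrix (Fin K) (Fin N) ℝ) :
    HasFDerivAt (fun Z : Matrix (Fin K) (Fin N) ℝ => Matrix.trace (Z * A * Zᵀ))
      (frobCLM (X * (A + Aᵀ))) X := by
  have hb := (ContinuousLinearMap.isBoundedBilinearMap (frobB (m := Fin K) (n := Fin N))).hasFDerivAt
    (mulR (K := K) A X, X)
  have hl : HasFDerivAt (fun Z : Matrix (Fin K) (Fin N) ℝ => (mulR (K := K) A Z, Z))
      ((mulR (K := K) A).prod (ContinuousLinearMap.id ℝ _)) X :=
    ((mulR (K := K) A).prod (ContinuousLinearMap.id ℝ _)).hasFDerivAt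
  have h := HasFDerivAt.comp
    (f := fun Z : Matrix (Fin K) (Fin N) ℝ => (mulR (K := K) A Z, Z)) X hb hl
  have hfun : (fun Z : Matrix (Fin K) (Fin N) ℝ => frobB (mulR (K := K) A Z) Z)
      = fun Z => Matrix.trace (Z * A * Zᵀ) := by
    funext Z
    simp [frobB, mulR, frobCLM_apply, Matrix.mul_assoc]
  simp only [Function.comp_def] at h
  erw [hfun] at h
  refine h.congr_fderiv (Eq.symm ?_)
  ext H
  erw [ContinuousLinearMap.comp_apply, IsBoundedBilinearMap.deriv_apply]
  simp [IsBoundedBilinearMap.deriv_apply, frobB, mulR, frobCLM_apply]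
  rw [Matrix.mul_add, Matrix.add_mul, Matrix.trace_add]
  congr 1
  change _ = Matrix.trace (H * A * Xᵀ)
  rw [← Matrix.trace_transpose (H * A * Xᵀ)]
  simp [Matrix.transpose_mul, Matrix.mul_assoc]

section selLemmas

variable {N C : ℕ} (lab : Fin N → Fin C)

lemma sel_transpose (c : Fin C) : (sel lab c)ᵀ = sel lab c := Matrix.diagonal_transpose _

lemma sel_mul_self (c : Fin C) : sel lab c * sel lab c = sel lab c := by
  rw [sel, Matrix.diagonal_mul_diagonal]
  refine congrArg Matrix.diagonal (funext fun i => ?_)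
  by_cases h : lab i = c <;> simp [h]

lemma onesM_transpose : (onesM N)ᵀ = onesM N := rfl

lemma sum_sel : ∑ c : Fin C, sel lab c = 1 := by
  ext i j
  by_cases h : i = j
  · subst h
    simp [sel, Matrix.sum_apply, Matrix.diagonal_apply, Matrix.one_apply]
  · simp [sel, Matrix.sum_apply, Matrix.diagonal_apply, Matrix.one_apply, h]

lemma onesM_sel_onesM (c : Fin C) :
    onesM N * sel lab c * onesM N =
      (((Finset.univ.filter fun i => lab i = c).card : ℝ)) • onesM N := by
  ext i j
  simp [onesM, sel, Matrix.mul_apply, Matrix.diagonal_apply, Finset.sum_ite_eq,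
    Finset.sum_boole]

lemma sum_card_eq : ∑ c : Fin C, ((Finset.univ.filter fun i => lab i = c).card) = N := by
  have h0 := Finset.card_eq_sum_card_fiberwise
    (fun (i : Fin N) (_ : i ∈ Finset.univ) => Finset.mem_univ (lab i))
  simpa using h0.symm

/-- Per-class algebraic identity `Q Qᵀ − R Rᵀ = P − 2a F + b P E + b E P − b² n E`. -/
lemma classD (c : Fin C) (nc : ℝ) (hnc : nc ≠ 0)
    (hEPE : onesM N * sel lab c * onesM N = nc • onesM N) :
    (sel lab c - (1/nc) • (sel lab c * onesM N * sel lab c)) *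
        (sel lab c - (1/nc) • (sel lab c * onesM N * sel lab c))ᵀ -
      ((1/nc) • (sel lab c * onesM N * sel lab c) - (1/(N:ℝ)) • (onesM N * sel lab c)) *
        ((1/nc) • (sel lab c * onesM N * sel lab c) - (1/(N:ℝ)) • (onesM N * sel lab c))ᵀ =
    sel lab c - (2 * (1/nc)) • (sel lab c * onesM N * sel lab c)
      + (1/(N:ℝ)) • (sel lab c * onesM N) + (1/(N:ℝ)) • (onesM N * sel lab c)
      - ((1/(N:ℝ))^2 * nc) • onesM N := by
  have hPP := sel_mul_self lab c
  have r1 : ∀ x : Matrix (Fin N) (Fin N) ℝ, sel lab c * (sel lab c * x) = sel lab c * x :=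
    fun x => by rw [← Matrix.mul_assoc, hPP]
  have r2' : onesM N * (sel lab c * onesM N) = nc • onesM N := by
    rw [← Matrix.mul_assoc]; exact hEPE
  have r2 : ∀ x : Matrix (Fin N) (Fin N) ℝ,
      onesM N * (sel lab c * (onesM N * x)) = nc • (onesM N * x) := fun x => by
    rw [← Matrix.mul_assoc, ← Matrix.mul_assoc, hEPE, Matrix.smul_mul]
  simp only [Matrix.transpose_sub, Matrix.transpose_smul, Matrix.transpose_mul,
    sel_transpose, onesM_transpose, Matrix.mul_assoc, Matrix.sub_mul, Matrix.mul_sub,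
    Matrix.smul_mul, Matrix.mul_smul, smul_smul, smul_sub, r1, r2, r2', hPP, sel_mul_self]
  match_scalars <;> field_simp <;> ring

/-- Summing the per-class identities. -/
lemma sumRHS (hN : 0 < N) (n : Fin C → ℕ)
    (hn : ∀ c, n c = (Finset.univ.filter fun i => lab i = c).card) :
    ∑ c : Fin C, (sel lab c - (2 * (1/(n c:ℝ))) • (sel lab c * onesM N * sel lab c)
        + (1/(N:ℝ)) • (sel lab c * onesM N) + (1/(N:ℝ)) • (onesM N * sel lab c)
        - ((1/(N:ℝ))^2 * (n c:ℝ)) • onesM N)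
      + 1
    = (2:ℝ) • (1 : Matrix (Fin N) (Fin N) ℝ) + (1/(N:ℝ)) • onesM N
        - (2:ℝ) • ∑ c : Fin C, (1/(n c:ℝ)) • (sel lab c * onesM N * sel lab c) := by
  have h1 := sum_sel lab
  have h2 : ∑ c : Fin C, ((n c : ℝ)) = (N : ℝ) := by
    have := sum_card_eq lab
    push_cast [hn, ← this]
    norm_cast
  have e1 : ∑ c : Fin C, (1/(N:ℝ)) • (sel lab c * onesM N) = (1/(N:ℝ)) • onesM N := by
    rw [← Finset.smul_sum, ← Finset.sum_mul, h1, Matrix.one_mul]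
  have e2 : ∑ c : Fin C, (1/(N:ℝ)) • (onesM N * sel lab c) = (1/(N:ℝ)) • onesM N := by
    rw [← Finset.smul_sum, ← Finset.mul_sum, h1, Matrix.mul_one]
  have e3 : ∑ c : Fin C, ((1/(N:ℝ))^2 * (n c:ℝ)) • onesM N = (1/(N:ℝ)) • onesM N := by
    rw [← Finset.sum_smul, ← Finset.mul_sum, h2]
    congr 1
    have : (N:ℝ) ≠ 0 := Nat.cast_ne_zero.2 hN.ne'
    field_simp
  have e4 : ∑ c : Fin C, (2 * (1/(n c:ℝ))) • (sel lab c * onesM N * sel lab c)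
      = (2:ℝ) • ∑ c : Fin C, (1/(n c:ℝ)) • (sel lab c * onesM N * sel lab c) := by
    rw [Finset.smul_sum]
    exact Finset.sum_congr rfl fun c _ => mul_smul _ _ _
  simp only [Finset.sum_sub_distrib, Finset.sum_add_distrib]
  rw [h1, e1, e2, e3, e4]
  module

end selLemmas

/-- The Fisher discriminative coefficient term
`g(X) = Σ_c (‖X P_c − M_c‖_F² − ‖M_c − M P_c‖_F²) + ‖X‖_F²` is differentiable and the
gradient of `½ g` at `X` (w.r.t. the Frobenius inner product) equals `2X + M − 2M̂`. -/
theorem stmt3 {K N C : ℕ} (lab : Fin N → Fin C)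
    (n : Fin C → ℕ) (hn : ∀ c, n c = (Finset.univ.filter fun i => lab i = c).card)
    (hn1 : ∀ c, 1 ≤ n c)
    (P : Fin C → Matrix (Fin N) (Fin N) ℝ) (hP : P = sel lab)
    (Mc : Matrix (Fin K) (Fin N) ℝ → Fin C → Matrix (Fin K) (Fin N) ℝ)
    (hMc : ∀ X c, Mc X c = ((1 : ℝ) / (n c : ℝ)) • (X * P c * onesM N * P c))
    (M : Matrix (Fin K) (Fin N) ℝ → Matrix (Fin K) (Fin N) ℝ)
    (hM : ∀ X, M X = ((1 : ℝ) / (N : ℝ)) • (X * onesM N))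
    (Mhat : Matrix (Fin K) (Fin N) ℝ → Matrix (Fin K) (Fin N) ℝ)
    (hMhat : ∀ X, Mhat X = ∑ c : Fin C, Mc X c)
    (g : Matrix (Fin K) (Fin N) ℝ → ℝ)
    (hg : ∀ X, g X = (∑ c : Fin C,
        (frobSq (X * P c - Mc X c) - frobSq (Mc X c - M X * P c))) + frobSq X)
    (X : Matrix (Fin K) (Fin N) ℝ) :
    HasFDerivAt (fun Z => (1/2) * g Z)
      (frobCLM ((2 : ℝ) • X + M X - (2 : ℝ) • Mhat X)) X := by
  subst hP
  rcases Nat.eq_zero_or_pos N with hN0 | hNpos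
  · -- degenerate case `N = 0`: everything is trivial
    have h0 : frobCLM ((2 : ℝ) • X + M X - (2 : ℝ) • Mhat X) = 0 := by
      ext H
      have hz : ((2 : ℝ) • X + M X - (2 : ℝ) • Mhat X) * Hᵀ = 0 := by
        ext i j
        rw [Matrix.mul_apply]
        apply Finset.sum_eq_zero
        intro k _
        exact absurd k.isLt (by omega)
      rw [frobCLM_apply, hz]
      simp
    rw [h0]
    have hconst : (fun Z : Matrix (Fin K) (Fin N) ℝ => (1/2 : ℝ) * g Z)
        = fun _ => (1/2 : ℝ) * g X := by
      funext Z
      have hZX : Z = X := by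
        ext i j
        exact absurd j.isLt (by omega)
      rw [hZX]
    rw [hconst]
    exact hasFDerivAt_const _ _
  · -- main case `0 < N`
    have hNne : (N : ℝ) ≠ 0 := Nat.cast_ne_zero.2 hNpos.ne'
    have hnne : ∀ c, ((n c : ℝ)) ≠ 0 := fun c =>
      Nat.cast_ne_zero.2 (by have := hn1 c; omega)
    have hEPE : ∀ c, onesM N * sel lab c * onesM N = ((n c : ℝ)) • onesM N := by
      intro c
      rw [hn c]
      exact onesM_sel_onesM lab c
    obtain ⟨S, hSdef⟩ : ∃ S : Matrix (Fin N) (Fin N) ℝ, S =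
      (∑ c : Fin C,
        ((sel lab c - (1/(n c:ℝ)) • (sel lab c * onesM N * sel lab c)) *
            (sel lab c - (1/(n c:ℝ)) • (sel lab c * onesM N * sel lab c))ᵀ -
          ((1/(n c:ℝ)) • (sel lab c * onesM N * sel lab c)
              - (1/(N:ℝ)) • (onesM N * sel lab c)) *
            ((1/(n c:ℝ)) • (sel lab c * onesM N * sel lab c)
              - (1/(N:ℝ)) • (onesM N * sel lab c))ᵀ))
        + 1 := ⟨_, rfl⟩
    have hsum1 : S = ∑ c : Fin C,
        (sel lab c - (2 * (1/(n c:ℝ))) • (sel lab c * onesM N * sel lab c)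
          + (1/(N:ℝ)) • (sel lab c * onesM N) + (1/(N:ℝ)) • (onesM N * sel lab c)
          - ((1/(N:ℝ))^2 * (n c:ℝ)) • onesM N) + 1 := by
      rw [hSdef]
      congr 1
      exact Finset.sum_congr rfl fun c _ => classD lab c _ (hnne c) (hEPE c)
    have hSval : S = (2:ℝ) • (1 : Matrix (Fin N) (Fin N) ℝ) + (1/(N:ℝ)) • onesM N
        - (2:ℝ) • ∑ c : Fin C, (1/(n c:ℝ)) • (sel lab c * onesM N * sel lab c) := by
      rw [hsum1]
      exact sumRHS lab hNpos n hn
    have hSsymm : Sᵀ = S := by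
      rw [hSdef]
      simp [Matrix.transpose_add, Matrix.transpose_sub, Matrix.transpose_sum,
        Matrix.transpose_mul, Matrix.transpose_transpose, Matrix.transpose_one]
    have hfr : ∀ (W : Matrix (Fin K) (Fin N) ℝ) (A : Matrix (Fin N) (Fin N) ℝ),
        frobSq (W * A) = Matrix.trace (W * (A * Aᵀ) * Wᵀ) := by
      intro W A
      rw [frobSq, Matrix.transpose_mul]
      simp [Matrix.mul_assoc]
    have hgS : ∀ Z, g Z = Matrix.trace (Z * S * Zᵀ) := by
      intro Z
      rw [hg]
      have hq : ∀ c, Z * sel lab c - Mc Z c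
          = Z * (sel lab c - (1/(n c:ℝ)) • (sel lab c * onesM N * sel lab c)) := by
        intro c
        rw [hMc]
        simp [Matrix.mul_sub, Matrix.mul_smul, Matrix.mul_assoc]
      have hr : ∀ c, Mc Z c - M Z * sel lab c
          = Z * ((1/(n c:ℝ)) • (sel lab c * onesM N * sel lab c)
              - (1/(N:ℝ)) • (onesM N * sel lab c)) := by
        intro c
        rw [hMc, hM]
        simp [Matrix.mul_sub, Matrix.mul_smul, Matrix.smul_mul, Matrix.mul_assoc]
      have tsub : ∀ D1 D2 : Matrix (Fin N) (Fin N) ℝ,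
          Matrix.trace (Z * (D1 - D2) * Zᵀ)
            = Matrix.trace (Z * D1 * Zᵀ) - Matrix.trace (Z * D2 * Zᵀ) := by
        intro D1 D2
        rw [Matrix.mul_sub, Matrix.sub_mul, Matrix.trace_sub]
      rw [hSdef, Matrix.mul_add, Matrix.add_mul, Matrix.trace_add, Matrix.mul_one,
        Matrix.mul_sum, Matrix.sum_mul, Matrix.trace_sum]
      congr 1
      refine Finset.sum_congr rfl fun c _ => ?_
      rw [tsub, hq c, hr c, hfr, hfr]
    have hXS : X * S = (2:ℝ) • X + M X - (2:ℝ) • Mhat X := by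
      rw [hSval, hM, hMhat, Matrix.mul_sub, Matrix.mul_add, Matrix.mul_smul,
        Matrix.mul_one, Matrix.mul_smul, Matrix.mul_smul]
      congr 2
      rw [Matrix.mul_sum]
      refine Finset.sum_congr rfl fun c _ => ?_
      rw [hMc, Matrix.mul_smul]
      simp [Matrix.mul_assoc]
    have hfeq : (fun Z : Matrix (Fin K) (Fin N) ℝ => (1/2 : ℝ) * g Z)
        = fun Z => (1/2 : ℝ) * Matrix.trace (Z * S * Zᵀ) :=
      funext fun Z => by rw [hgS Z]
    rw [hfeq]
    have hder := (hasFDerivAt_traceQuad S X).const_mul (1/2 : ℝ)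
    refine hder.congr_fderiv (Eq.symm ?_)
    have hhalf : (1/2 : ℝ) • frobCLM (X * (S + Sᵀ)) = frobCLM (X * S) := by
      ext H
      rw [hSsymm]
      simp only [ContinuousLinearMap.smul_apply, frobCLM_apply, smul_eq_mul]
      rw [Matrix.mul_add, Matrix.add_mul, Matrix.trace_add]
      ring
    erw [hhalf, hXS]
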